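/- Let 1 ≤ k ≤ n and let C be the division of {1,...,n} with all n elements in position k. Then a permutation w ∈ S_n is a type B C-permutation if and only if w has at most k-1 descents. -/

import Mathlib

open scoped Pointwise
open MeasureTheory Nat

namespace MixedEulerian

/-- A division of a finite set `S` into an ordered sequence of blocks,
with all elements of earlier blocks strictly smaller than those of later blocks. -/
def IsDivision (C : List (Finset ℕ)) (S : Finset ℕ) : Prop :=
  (∀ s ∈ S, ∃ i, i < C.length ∧ s ∈ C.getD i ∅) ∧
  (∀ i, i < C.length → C.getD i ∅ ⊆ S) ∧
  (∀ i j, i < j → j < C.length →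
    ∀ s ∈ C.getD i ∅, ∀ t ∈ C.getD j ∅, s < t)

/-- Type A admissibility: `s ∈ C_i` is admissible iff `s = min C₁`, `s = max C_n`,
or `i` is strictly between the first and the last index. (Indices are 0-based.) -/
def AdmissibleA (C : List (Finset ℕ)) (s : ℕ) : Prop :=
  ∃ i, i < C.length ∧ s ∈ C.getD i ∅ ∧
    ((i = 0 ∧ ∀ t ∈ C.getD 0 ∅, s ≤ t) ∨
     (i = C.length - 1 ∧ ∀ t ∈ C.getD i ∅, t ≤ s) ∨
     (0 < i ∧ i + 1 < C.length))

/-- Type A deletion of `s` from the division `C`. -/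
def deleteA (C : List (Finset ℕ)) (s : ℕ) : List (Finset ℕ) :=
  let i := C.findIdx (fun b => decide (s ∈ b))
  let B := C.getD i ∅
  let lo := B.filter (fun t => t < s)
  let hi := B.filter (fun t => s < t)
  if C.length ≤ 1 then []
  else if i = 0 then (hi ∪ C.getD 1 ∅) :: C.drop 2
  else if i = C.length - 1 then C.take (i - 1) ++ [C.getD (i - 1) ∅ ∪ lo]
  else C.take (i - 1) ++ [C.getD (i - 1) ∅ ∪ lo, hi ∪ C.getD (i + 1) ∅] ++ C.drop (i + 2)

/-- `w` is a (type A) `C`-permutation: each entry is admissible in the division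
obtained by deleting the previous entries, and all elements get deleted. -/
def IsCPermA : List (Finset ℕ) → List ℕ → Prop
  | C, [] => ∀ B ∈ C, B = ∅
  | C, s :: w => AdmissibleA C s ∧ IsCPermA (deleteA C s) w

/-- Type B admissibility: `s ∈ C_i` is admissible iff `s = min C₁` or `i ≠ 0`. -/
def AdmissibleB (C : List (Finset ℕ)) (s : ℕ) : Prop :=
  ∃ i, i < C.length ∧ s ∈ C.getD i ∅ ∧
    ((i = 0 ∧ ∀ t ∈ C.getD 0 ∅, s ≤ t) ∨ i ≠ 0)

/-- Type B deletion of `s` from the division `C`. -/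
def deleteB (C : List (Finset ℕ)) (s : ℕ) : List (Finset ℕ) :=
  let i := C.findIdx (fun b => decide (s ∈ b))
  if i = C.length - 1 ∧ 0 < i then
    C.take (i - 1) ++ [C.getD (i - 1) ∅ ∪ ((C.getD i ∅).erase s)]
  else deleteA C s

/-- `w` is a type B `C`-permutation. -/
def IsCPermB : List (Finset ℕ) → List ℕ → Prop
  | C, [] => ∀ B ∈ C, B = ∅
  | C, s :: w => AdmissibleB C s ∧ IsCPermB (deleteB C s) w

/-- A sequence of elements that can be successively (type A) deleted from `C`. -/
def AdmissibleSeqA : List (Finset ℕ) → List ℕ → Prop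
  | _, [] => True
  | C, s :: w => AdmissibleA C s ∧ AdmissibleSeqA (deleteA C s) w

/-- Number of descents of a list: the number of adjacent pairs that decrease. -/
def listDescents {α : Type*} [LinearOrder α] (l : List α) : ℕ :=
  (l.zip l.tail).countP (fun p => decide (p.2 < p.1))

/-- Eulerian number `A(n,k)`: permutations of `{1,…,n}` with exactly `k-1` descents. -/
def eulerianA (n k : ℕ) : ℕ :=
  (List.range' 1 n).permutations.countP (fun l => decide (listDescents l = k - 1))

/-- `A(m,t;r)`: permutations of `{1,…,m+1}` with `t-1` descents and first entry `r+1`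
(declared to be `0` when `t = 0`; it vanishes automatically when `t > m+1`). -/
def eulerianFirst (m t r : ℕ) : ℕ :=
  if t = 0 then 0 else
    (List.range' 1 (m + 1)).permutations.countP
      (fun l => decide (listDescents l = t - 1 ∧ l.headI = r + 1))

/-- The index of `t` in the `C`-permutation `w`: the (1-based) position of the block
containing `t` just before `t` is deleted. -/
def indexFn (C : List (Finset ℕ)) : List ℕ → ℕ → ℕ
  | [], _ => 0
  | s :: w, t =>
      if t = s then C.findIdx (fun b => decide (t ∈ b)) + 1
      else indexFn (deleteA C s) w t

/-- An index function of `C`: any function sending each element of `C_i` into `{1,…,i}`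
(1-based). -/
def IsIndexFn (C : List (Finset ℕ)) (I : ℕ → ℕ) : Prop :=
  ∀ i, i < C.length → ∀ s ∈ C.getD i ∅, 1 ≤ I s ∧ I s ≤ i + 1

/-- `C` is superdiagonal: `|C₁| + ⋯ + |C_i| ≥ i` for all `i`. -/
def Superdiagonal (C : List (Finset ℕ)) : Prop :=
  ∀ i, i ≤ C.length → i ≤ ∑ j ∈ Finset.range i, (C.getD j ∅).card

/-- `C` is subdiagonal: `|C_n| + ⋯ + |C_{n-i+1}| ≥ i` for all `i`. -/
def Subdiagonal (C : List (Finset ℕ)) : Prop :=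
  ∀ i, i ≤ C.length → i ≤ ∑ j ∈ Finset.range i, (C.getD (C.length - 1 - j) ∅).card

/-- The canonical division of `{1,…,c.sum}` with block sizes given by `c`. -/
def divisionOf (c : List ℕ) : List (Finset ℕ) :=
  (List.range c.length).map (fun i => Finset.Ioc ((c.take i).sum) ((c.take (i + 1)).sum))

/-- The number of `C`-permutations for a division with block sizes `c`. -/
noncomputable def NPerm (c : List ℕ) : ℕ :=
  Nat.card {w : List ℕ // IsCPermA (divisionOf c) w}

/-- The division of `{1,…,n}` with all elements in (1-based) position `k`. -/
def midDivision (n k : ℕ) : List (Finset ℕ) :=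
  List.replicate (k - 1) ∅ ++ [Finset.Icc 1 n] ++ List.replicate (n - k) ∅

/-- The hypersimplex `Δ_{k,n} ⊆ ℝ^{n+1}`. -/
def hypersimplex (n k : ℕ) : Set (Fin (n + 1) → ℝ) :=
  convexHull ℝ {x | ∃ T : Finset (Fin (n + 1)), T.card = k ∧
    x = fun i => if i ∈ T then (1 : ℝ) else 0}

/-- The permutohedron `P(y₁,…,y_m) ⊆ ℝ^m`. -/
def permutohedron {m : ℕ} (y : Fin m → ℝ) : Set (Fin m → ℝ) :=
  convexHull ℝ {x | ∃ w : Equiv.Perm (Fin m), x = y ∘ w}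

/-- The polytope `Γ_{k,n} ⊆ ℝ^n`, the convex hull of all `±e_{i₁} ± ⋯ ± e_{i_k}`. -/
def gammaPolytope (n k : ℕ) : Set (Fin n → ℝ) :=
  convexHull ℝ {x | ∃ T : Finset (Fin n), T.card = k ∧ ∃ ε : Fin n → ℝ,
    (∀ i, ε i = 1 ∨ ε i = -1) ∧ x = fun i => if i ∈ T then ε i else 0}

/-- The signed permutohedron `SP(y₁,…,y_n) ⊆ ℝ^n`. -/
def signedPermutohedron {m : ℕ} (y : Fin m → ℝ) : Set (Fin m → ℝ) :=
  convexHull ℝ {x | ∃ w : Equiv.Perm (Fin m), ∃ ε : Fin m → ℝ,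
    (∀ i, ε i = 1 ∨ ε i = -1) ∧ x = fun i => ε i * y (w i)}


lemma listDescents_nil : listDescents ([] : List ℕ) = 0 := rfl
lemma listDescents_singleton (a : ℕ) : listDescents [a] = 0 := rfl
lemma listDescents_cons (a b : ℕ) (l : List ℕ) :
    listDescents (a :: b :: l) = listDescents (b :: l) + (if b < a then 1 else 0) := by
  simp [listDescents, List.countP_cons]

lemma listDescents_lt_length (l : List ℕ) (h : l ≠ []) : listDescents l < l.length := by
  have h1 := List.countP_le_length (p := fun p : ℕ × ℕ => decide (p.2 < p.1)) (l := l.zip l.tail)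
  have h2 : (l.zip l.tail).length = l.length - 1 := by
    rw [List.length_zip, List.length_tail]; omega
  have : 0 < l.length := List.length_pos_iff.2 h
  unfold listDescents; omega

lemma listDescents_eq_zero {l : List ℕ} (hl : l.Nodup) :
    listDescents l = 0 ↔ l.Chain' (· < ·) := by
  induction l with
  | nil => simp [listDescents_nil, List.Chain', List.isChain_nil]
  | cons a l ih =>
    cases l with
    | nil => simp [listDescents_singleton, List.Chain', List.isChain_singleton]
    | cons b t =>
      have hab : a ≠ b := by simp [List.nodup_cons] at hl; tauto
      rw [listDescents_cons, List.Chain', List.isChain_cons_cons, ← List.Chain', ← ih hl.of_cons]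
      constructor
      · intro h
        have h1 : ¬ b < a := by by_contra hh; simp [hh] at h
        exact ⟨by omega, by omega⟩
      · rintro ⟨h1, h2⟩; simp [h2]; omega


def sdiv (a : ℕ) (B : Finset ℕ) (b : ℕ) : List (Finset ℕ) :=
  List.replicate a ∅ ++ B :: List.replicate b ∅

def pdiv (a : ℕ) (B₁ B₂ : Finset ℕ) (b : ℕ) : List (Finset ℕ) :=
  List.replicate a ∅ ++ B₁ :: B₂ :: List.replicate b ∅

lemma length_sdiv (a : ℕ) (B : Finset ℕ) (b : ℕ) : (sdiv a B b).length = a + b + 1 := by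
  simp [sdiv]; omega

lemma length_pdiv (a : ℕ) (B₁ B₂ : Finset ℕ) (b : ℕ) : (pdiv a B₁ B₂ b).length = a + b + 2 := by
  simp [pdiv]; omega

lemma getD_replicate_empty (b i : ℕ) : (List.replicate b (∅:Finset ℕ)).getD i ∅ = ∅ := by
  induction b generalizing i with
  | zero => simp
  | succ n ih => cases i <;> simp [List.replicate_succ, ih]

lemma getD_replicate_append (a : ℕ) (l : List (Finset ℕ)) (i : ℕ) :
    (List.replicate a (∅ : Finset ℕ) ++ l).getD i ∅ =
      if i < a then ∅ else l.getD (i - a) ∅ := by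
  induction a generalizing i with
  | zero => simp
  | succ n ih =>
    cases i with
    | zero => simp [List.replicate_succ]
    | succ j =>
      rw [List.replicate_succ, List.cons_append, List.getD_cons_succ, ih]
      split <;> split <;> first | rfl | omega | (congr 1; omega)

lemma getD_sdiv (a : ℕ) (B : Finset ℕ) (b i : ℕ) :
    (sdiv a B b).getD i ∅ = if i = a then B else ∅ := by
  rw [sdiv, getD_replicate_append]
  rcases lt_trichotomy i a with h | h | h
  · simp [h, Nat.ne_of_lt h]
  · simp [h]
  · rw [if_neg (by omega), if_neg (by omega)]
    obtain ⟨j, hj⟩ : ∃ j, i - a = j + 1 := ⟨i - a - 1, by omega⟩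
    rw [hj, List.getD_cons_succ, getD_replicate_empty]

lemma getD_pdiv (a : ℕ) (B₁ B₂ : Finset ℕ) (b i : ℕ) :
    (pdiv a B₁ B₂ b).getD i ∅ = if i = a then B₁ else if i = a + 1 then B₂ else ∅ := by
  rw [pdiv, getD_replicate_append]
  rcases lt_trichotomy i a with h | h | h
  · rw [if_pos h, if_neg (by omega), if_neg (by omega)]
  · simp [h]
  · rw [if_neg (by omega), if_neg (by omega)]
    by_cases h2 : i = a + 1
    · rw [if_pos (by omega), show i - a = 1 by omega]; rfl
    · rw [if_neg h2]
      obtain ⟨j, hj⟩ : ∃ j, i - a = j + 2 := ⟨i - a - 2, by omega⟩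
      rw [hj]
      show (List.replicate b (∅:Finset ℕ)).getD j ∅ = ∅
      exact getD_replicate_empty b j

lemma findIdx_replicate_append (p : Finset ℕ → Bool) (hp : p ∅ = false) (a : ℕ)
    (l : List (Finset ℕ)) :
    (List.replicate a (∅ : Finset ℕ) ++ l).findIdx p = a + l.findIdx p := by
  induction a with
  | zero => simp
  | succ n ih => rw [List.replicate_succ, List.cons_append, List.findIdx_cons, hp]; simp [ih]; omega

lemma findIdx_sdiv {s : ℕ} {B : Finset ℕ} (hs : s ∈ B) (a b : ℕ) :
    (sdiv a B b).findIdx (fun t => decide (s ∈ t)) = a := by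
  rw [sdiv, findIdx_replicate_append _ (by simp), List.findIdx_cons]
  simp [hs]

lemma findIdx_pdiv₁ {s : ℕ} {B₁ : Finset ℕ} (B₂ : Finset ℕ) (hs : s ∈ B₁) (a b : ℕ) :
    (pdiv a B₁ B₂ b).findIdx (fun t => decide (s ∈ t)) = a := by
  rw [pdiv, findIdx_replicate_append _ (by simp), List.findIdx_cons]
  simp [hs]

lemma findIdx_pdiv₂ {s : ℕ} {B₁ B₂ : Finset ℕ} (hs1 : s ∉ B₁) (hs2 : s ∈ B₂) (a b : ℕ) :
    (pdiv a B₁ B₂ b).findIdx (fun t => decide (s ∈ t)) = a + 1 := by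
  rw [pdiv, findIdx_replicate_append _ (by simp), List.findIdx_cons]
  simp [hs1, List.findIdx_cons, hs2]

lemma take_sdiv (a : ℕ) (B : Finset ℕ) (b : ℕ) :
    (sdiv a B b).take a = List.replicate a ∅ := by
  rw [sdiv, List.take_left']; simp

lemma take_pdiv (a : ℕ) (B₁ B₂ : Finset ℕ) (b : ℕ) :
    (pdiv a B₁ B₂ b).take a = List.replicate a ∅ := by
  rw [pdiv, List.take_left']; simp

lemma drop_replicate_append (a j : ℕ) (l : List (Finset ℕ)) :
    (List.replicate a (∅ : Finset ℕ) ++ l).drop (a + j) = l.drop j := by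
  induction a with
  | zero => simp
  | succ n ih => rw [List.replicate_succ, List.cons_append, show n+1+j = (n+j)+1 by omega,
      List.drop_succ_cons, ih]





lemma take_replicate_append (j a : ℕ) (h : j ≤ a) (l : List (Finset ℕ)) :
    (List.replicate a (∅ : Finset ℕ) ++ l).take j = List.replicate j ∅ := by
  induction j generalizing a with
  | zero => simp
  | succ n ih =>
    obtain ⟨m, rfl⟩ : ∃ m, a = m + 1 := ⟨a - 1, by omega⟩
    rw [List.replicate_succ, List.cons_append, List.take_succ_cons, ih m (by omega),
      List.replicate_succ]

lemma deleteB_singleton {s : ℕ} {B : Finset ℕ} (hs : s ∈ B) : deleteB [B] s = [] := by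
  simp [deleteB, deleteA, List.findIdx_cons, hs]

lemma deleteB_sdiv_left {s : ℕ} {B : Finset ℕ} (hs : s ∈ B) (b : ℕ) :
    deleteB (sdiv 0 B (b + 1)) s = sdiv 0 (B.filter (fun t => s < t)) b := by
  have hf := findIdx_sdiv hs 0 (b+1)
  have hl := length_sdiv 0 B (b+1)
  rw [deleteB, hf, if_neg (by omega), deleteA, hf, if_neg (by omega), if_pos rfl,
    getD_sdiv, getD_sdiv, if_pos rfl, if_neg (by omega)]
  rw [Finset.union_empty]
  congr 1

lemma deleteB_sdiv_last {s : ℕ} {B : Finset ℕ} (hs : s ∈ B) (a : ℕ) :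
    deleteB (sdiv (a + 1) B 0) s = sdiv a (B.erase s) 0 := by
  have hf := findIdx_sdiv hs (a+1) 0
  have hl := length_sdiv (a+1) B 0
  rw [deleteB, hf, if_pos ⟨by omega, by omega⟩]
  rw [show a + 1 - 1 = a from rfl, getD_sdiv, getD_sdiv, if_neg (by omega), if_pos rfl]
  rw [sdiv, take_replicate_append a (a+1) (by omega)]
  rw [Finset.empty_union]
  rfl

lemma deleteB_sdiv_mid {s : ℕ} {B : Finset ℕ} (hs : s ∈ B) (a b : ℕ) :
    deleteB (sdiv (a + 1) B (b + 1)) s =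
      pdiv a (B.filter (fun t => t < s)) (B.filter (fun t => s < t)) b := by
  have hf := findIdx_sdiv hs (a+1) (b+1)
  have hl := length_sdiv (a+1) B (b+1)
  have e1 : a ≠ a + 1 := by omega
  have e2 : a + 1 + 1 ≠ a + 1 := by omega
  rw [deleteB, hf, if_neg (by omega), deleteA, hf, if_neg (by omega), if_neg (by omega),
    if_neg (by omega)]
  rw [show a + 1 - 1 = a from rfl]
  simp only [getD_sdiv, e1, e2, eq_self_iff_true, if_true, if_false, if_neg e1, if_neg e2]
  rw [sdiv, take_replicate_append a (a+1) (by omega)]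
  rw [show a + 1 + 2 = (a+1) + 2 from rfl, drop_replicate_append]
  rw [Finset.empty_union, Finset.union_empty]
  simp [pdiv, List.replicate_succ]

lemma deleteB_pdiv_hi_mid {s : ℕ} {B₁ B₂ : Finset ℕ} (hs1 : s ∉ B₁) (hs2 : s ∈ B₂) (a b : ℕ) :
    deleteB (pdiv a B₁ B₂ (b + 1)) s =
      pdiv a (B₁ ∪ B₂.filter (fun t => t < s)) (B₂.filter (fun t => s < t)) b := by
  have hf := findIdx_pdiv₂ hs1 hs2 a (b+1)
  have hl := length_pdiv a B₁ B₂ (b+1)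
  have e1 : a + 1 ≠ a := by omega
  have e2 : a + 1 + 1 ≠ a := by omega
  have e3 : a + 1 + 1 ≠ a + 1 := by omega
  rw [deleteB, hf, if_neg (by omega), deleteA, hf, if_neg (by omega), if_neg (by omega),
    if_neg (by omega)]
  rw [show a + 1 - 1 = a from rfl]
  simp only [getD_pdiv, if_neg e1, if_neg e2, if_neg e3, eq_self_iff_true, if_true]
  rw [pdiv, take_replicate_append a a (by omega)]
  rw [show a + 1 + 2 = a + 3 from rfl, drop_replicate_append]
  rw [Finset.union_empty]
  simp [pdiv, List.replicate_succ]

lemma deleteB_pdiv_hi_last {s : ℕ} {B₁ B₂ : Finset ℕ} (hs1 : s ∉ B₁) (hs2 : s ∈ B₂) (a : ℕ) :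
    deleteB (pdiv a B₁ B₂ 0) s = sdiv a (B₁ ∪ B₂.erase s) 0 := by
  have hf := findIdx_pdiv₂ hs1 hs2 a 0
  have hl := length_pdiv a B₁ B₂ 0
  have e1 : a + 1 ≠ a := by omega
  rw [deleteB, hf, if_pos ⟨by omega, by omega⟩]
  rw [show a + 1 - 1 = a from rfl]
  simp only [getD_pdiv, if_neg e1, eq_self_iff_true, if_true]
  rw [pdiv, take_replicate_append a a (by omega)]
  rfl

lemma deleteB_pdiv_lo_mid {s : ℕ} {B₁ B₂ : Finset ℕ} (hs1 : s ∈ B₁) (a b : ℕ) :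
    deleteB (pdiv (a + 1) B₁ B₂ b) s =
      pdiv a (B₁.filter (fun t => t < s)) (B₁.filter (fun t => s < t) ∪ B₂) b := by
  have hf := findIdx_pdiv₁ B₂ hs1 (a+1) b
  have hl := length_pdiv (a+1) B₁ B₂ b
  have e1 : a ≠ a + 1 := by omega
  have e2 : a ≠ a + 1 + 1 := by omega
  have e3 : a + 1 + 1 ≠ a + 1 := by omega
  rw [deleteB, hf, if_neg (by omega), deleteA, hf, if_neg (by omega), if_neg (by omega),
    if_neg (by omega)]
  rw [show a + 1 - 1 = a from rfl]
  simp only [getD_pdiv, if_neg e1, if_neg e2, if_neg e3, eq_self_iff_true, if_true]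
  rw [pdiv, take_replicate_append a (a+1) (by omega)]
  rw [show a + 1 + 2 = (a + 1) + 2 from rfl, drop_replicate_append]
  rw [Finset.empty_union]
  simp [pdiv, List.replicate_succ]

lemma deleteB_pdiv_lo_first {s : ℕ} {B₁ B₂ : Finset ℕ} (hs1 : s ∈ B₁) (b : ℕ) :
    deleteB (pdiv 0 B₁ B₂ b) s = sdiv 0 (B₁.filter (fun t => s < t) ∪ B₂) b := by
  have hf := findIdx_pdiv₁ B₂ hs1 0 b
  have hl := length_pdiv 0 B₁ B₂ b
  rw [deleteB, hf, if_neg (by omega), deleteA, hf, if_neg (by omega), if_pos rfl,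
    getD_pdiv, getD_pdiv, if_pos rfl, if_neg (by omega), if_pos rfl]
  congr 1


lemma isCPermB_cons (C : List (Finset ℕ)) (s : ℕ) (w : List ℕ) :
    IsCPermB C (s :: w) ↔ AdmissibleB C s ∧ IsCPermB (deleteB C s) w := Iff.rfl

lemma isCPermB_nil_nil : IsCPermB [] [] := by
  show ∀ B ∈ ([] : List (Finset ℕ)), B = ∅
  simp

lemma admissibleB_sdiv {a b : ℕ} {B : Finset ℕ} {s : ℕ} :
    AdmissibleB (sdiv a B b) s ↔ s ∈ B ∧ (a ≠ 0 ∨ ∀ t ∈ B, s ≤ t) := by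
  constructor
  · rintro ⟨i, hi, hm, hd⟩
    rw [getD_sdiv] at hm
    by_cases h : i = a
    · subst h
      rw [if_pos rfl] at hm
      refine ⟨hm, ?_⟩
      rcases hd with ⟨h0, hmin⟩ | h0
      · subst h0
        right
        rw [getD_sdiv, if_pos rfl] at hmin
        exact hmin
      · left; exact h0
    · rw [if_neg h] at hm; exact absurd hm (Finset.notMem_empty s)
  · rintro ⟨hm, hd⟩
    refine ⟨a, by rw [length_sdiv]; omega, by rw [getD_sdiv, if_pos rfl]; exact hm, ?_⟩
    by_cases h : a = 0
    · subst h
      rcases hd with h0 | h0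
      · exact absurd rfl h0
      · left; exact ⟨rfl, by rw [getD_sdiv, if_pos rfl]; exact h0⟩
    · right; exact h
  
lemma admissibleB_pdiv {a b : ℕ} {B₁ B₂ : Finset ℕ} {s : ℕ} :
    AdmissibleB (pdiv a B₁ B₂ b) s ↔
      s ∈ B₂ ∨ (s ∈ B₁ ∧ (a ≠ 0 ∨ ∀ t ∈ B₁, s ≤ t)) := by
  constructor
  · rintro ⟨i, hi, hm, hd⟩
    rw [getD_pdiv] at hm
    by_cases h : i = a
    · subst h
      rw [if_pos rfl] at hm
      refine Or.inr ⟨hm, ?_⟩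
      rcases hd with ⟨h0, hmin⟩ | h0
      · subst h0
        right
        rw [getD_pdiv, if_pos rfl] at hmin
        exact hmin
      · left; exact h0
    · by_cases h2 : i = a + 1
      · subst h2
        rw [if_neg h, if_pos rfl] at hm
        exact Or.inl hm
      · rw [if_neg h, if_neg h2] at hm; exact absurd hm (Finset.notMem_empty s)
  · rintro (hm | ⟨hm, hd⟩)
    · exact ⟨a + 1, by rw [length_pdiv]; omega,
        by rw [getD_pdiv, if_neg (by omega), if_pos rfl]; exact hm, Or.inr (by omega)⟩
    · refine ⟨a, by rw [length_pdiv]; omega, by rw [getD_pdiv, if_pos rfl]; exact hm, ?_⟩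
      by_cases h : a = 0
      · subst h
        rcases hd with h0 | h0
        · exact absurd rfl h0
        · left; exact ⟨rfl, by rw [getD_pdiv, if_pos rfl]; exact h0⟩
      · right; exact h

lemma min_of_descents_zero {s : ℕ} {l : List ℕ} (hnd : (s :: l).Nodup)
    (h : listDescents (s :: l) = 0) : ∀ t ∈ (s :: l).toFinset, s ≤ t := by
  have hch := (listDescents_eq_zero hnd).1 h
  have hp := List.isChain_iff_pairwise.1 hch
  intro t ht
  rw [List.toFinset_cons, Finset.mem_insert, List.mem_toFinset] at ht
  rcases ht with rfl | ht
  · exact le_refl t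
  · exact ((List.pairwise_cons.1 hp).1 t ht).le

lemma fs_filter_lt_insert (s : ℕ) (R : Finset ℕ) :
    (insert s R).filter (fun t => t < s) = R.filter (fun t => t < s) := by
  rw [Finset.filter_insert, if_neg (lt_irrefl s)]

lemma fs_filter_gt_insert (s : ℕ) (R : Finset ℕ) :
    (insert s R).filter (fun t => s < t) = R.filter (fun t => s < t) := by
  rw [Finset.filter_insert, if_neg (lt_irrefl s)]

lemma fs_filter_gt_min {s : ℕ} {R : Finset ℕ} (hs : s ∉ R)
    (hmin : ∀ t ∈ insert s R, s ≤ t) :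
    (insert s R).filter (fun t => s < t) = R := by
  rw [fs_filter_gt_insert]
  apply Finset.filter_true_of_mem
  intro t ht
  have h1 := hmin t (Finset.mem_insert_of_mem ht)
  have h2 : t ≠ s := by rintro rfl; exact hs ht
  omega

lemma fsF4 {R : Finset ℕ} {s c : ℕ} (hs : s ∉ R) (hc : c ∉ insert s R) (hcs : c < s) :
    (insert s R).filter (fun t => t < c) ∪
      ((insert s R).filter (fun t => c < t)).filter (fun t => t < s)
      = R.filter (fun t => t < s) := by
  simp only [Finset.mem_insert, not_or] at hc
  ext t
  simp only [Finset.mem_union, Finset.mem_filter, Finset.mem_insert]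
  by_cases hts : t = s
  · subst hts; simp [hs]; try omega
  by_cases htc : t = c
  · subst htc; simp [hc.1, hc.2]; try omega
  by_cases hm : t ∈ R <;> simp [hts, htc, hm] <;> omega

lemma fsF5 {R : Finset ℕ} {s c : ℕ} (hs : s ∉ R) (hcs : c < s) :
    ((insert s R).filter (fun t => c < t)).filter (fun t => s < t)
      = R.filter (fun t => s < t) := by
  ext t
  simp only [Finset.mem_filter, Finset.mem_insert]
  by_cases hts : t = s
  · subst hts; simp [hs]; try omega
  by_cases hm : t ∈ R <;> simp [hts, hm] <;> omega

lemma fsF6 {R : Finset ℕ} {s c : ℕ} (hs : s ∉ R) (hc : c ∉ insert s R) (hcs : c < s) :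
    (insert s R).filter (fun t => t < c) ∪
      ((insert s R).filter (fun t => c < t)).erase s = R := by
  simp only [Finset.mem_insert, not_or] at hc
  ext t
  simp only [Finset.mem_union, Finset.mem_filter, Finset.mem_insert, Finset.mem_erase]
  by_cases hts : t = s
  · subst hts; simp [hs]; try omega
  by_cases htc : t = c
  · subst htc; simp [hc.1, hc.2]
  by_cases hm : t ∈ R <;> simp [hts, htc, hm] <;> omega

lemma fsF7 {R : Finset ℕ} {s c : ℕ} (hs : s ∉ R) (hsc : s < c) :
    ((insert s R).filter (fun t => t < c)).filter (fun t => t < s)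
      = R.filter (fun t => t < s) := by
  ext t
  simp only [Finset.mem_filter, Finset.mem_insert]
  by_cases hts : t = s
  · subst hts; simp [hs]; try omega
  by_cases hm : t ∈ R <;> simp [hts, hm] <;> omega

lemma fsF8 {R : Finset ℕ} {s c : ℕ} (hs : s ∉ R) (hc : c ∉ insert s R) (hsc : s < c) :
    ((insert s R).filter (fun t => t < c)).filter (fun t => s < t) ∪
      (insert s R).filter (fun t => c < t) = R.filter (fun t => s < t) := by
  simp only [Finset.mem_insert, not_or] at hc
  ext t
  simp only [Finset.mem_union, Finset.mem_filter, Finset.mem_insert]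
  by_cases hts : t = s
  · subst hts; simp [hs]; try omega
  by_cases htc : t = c
  · subst htc; simp [hc.1, hc.2]; try omega
  by_cases hm : t ∈ R <;> simp [hts, htc, hm] <;> omega


lemma key (N : ℕ) : ∀ w : List ℕ, w.length = N → w.Nodup →
    (∀ a b : ℕ, N = a + b + 1 →
      (IsCPermB (sdiv a w.toFinset b) w ↔ listDescents w ≤ a)) ∧
    (∀ a b c : ℕ, N = a + b + 2 → c ∉ w.toFinset →
      (IsCPermB (pdiv a (w.toFinset.filter (fun t => t < c))
          (w.toFinset.filter (fun t => c < t)) b) w ↔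
        listDescents w + (if w.headI < c then 1 else 0) ≤ a + 1)) := by
  induction N using Nat.strong_induction_on with
  | _ N IH =>
    intro w hlen hnd
    match w with
    | [] =>
      constructor
      · intro a b hab; exfalso; simp at hlen; omega
      · intro a b c hab _; exfalso; simp at hlen; omega
    | s :: w' =>
      have hcons := List.nodup_cons.1 hnd
      have hsn : s ∉ w' := hcons.1
      have hnd' : w'.Nodup := hcons.2
      have hsF : s ∉ w'.toFinset := by simpa using hsn
      have hlen2 : w'.length + 1 = N := by simpa using hlen
      have IH' := IH (N - 1) (by omega) w' (by omega) hnd'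
      constructor
      · -- S claim
        intro a b hab
        have hwl : w'.length = a + b := by omega
        simp only [List.toFinset_cons]
        rw [isCPermB_cons, admissibleB_sdiv]
        have hmem : s ∈ insert s w'.toFinset := Finset.mem_insert_self s _
        match a, b with
        | 0, 0 =>
          have hw' : w' = [] := List.length_eq_zero_iff.1 (by omega)
          subst hw'
          have e : sdiv 0 (insert s (List.toFinset [])) 0
              = [insert s (List.toFinset [])] := rfl
          rw [e, deleteB_singleton hmem]
          refine iff_of_true ⟨⟨hmem, Or.inr ?_⟩, isCPermB_nil_nil⟩ ?_
          · intro t ht; simp at ht; omega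
          · simp [listDescents_singleton]
        | 0, (b' + 1) =>
          rw [deleteB_sdiv_left hmem b']
          by_cases hmin : ∀ t ∈ insert s w'.toFinset, s ≤ t
          · rw [fs_filter_gt_min hsF hmin]
            rw [(IH').1 0 b' (by omega)]
            obtain ⟨x, xs, rfl⟩ : ∃ x xs, w' = x :: xs := by
              cases w' with
              | nil => exfalso; rw [List.length_nil] at hwl; omega
              | cons x xs => exact ⟨x, xs, rfl⟩
            have hxs : x ≠ s := by simp at hsn; tauto
            have hh : ¬ x < s := by
              have := hmin x (by simp)
              omega
            rw [listDescents_cons, if_neg hh]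
            constructor
            · rintro ⟨_, hx⟩; omega
            · intro hx; exact ⟨⟨hmem, Or.inr hmin⟩, by omega⟩
          · refine iff_of_false ?_ ?_
            · rintro ⟨⟨_, hadm⟩, _⟩
              exact hmin (hadm.resolve_left (by omega))
            · intro hdes
              refine hmin ?_
              have h0 := min_of_descents_zero hnd (by omega)
              simpa using h0
        | (a' + 1), 0 =>
          rw [deleteB_sdiv_last hmem a', Finset.erase_insert hsF]
          rw [IH'.1 a' 0 (by omega)]
          refine iff_of_true ⟨⟨hmem, Or.inl (by omega)⟩, ?_⟩ ?_
          · have := listDescents_lt_length w' (by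
              intro h; rw [h] at hwl; simp at hwl)
            omega
          · have := listDescents_lt_length (s :: w') (by simp)
            simp at this
            omega
        | (a' + 1), (b' + 1) =>
          rw [deleteB_sdiv_mid hmem a' b']
          rw [fs_filter_lt_insert, fs_filter_gt_insert]
          rw [(IH').2 a' b' s (by omega) hsF]
          obtain ⟨x, xs, rfl⟩ : ∃ x xs, w' = x :: xs := by
            cases w' with
            | nil => exfalso; rw [List.length_nil] at hwl; omega
            | cons x xs => exact ⟨x, xs, rfl⟩
          rw [listDescents_cons]
          rw [List.headI_cons]
          constructor
          · rintro ⟨_, hx⟩; omega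
          · intro hx; exact ⟨⟨hmem, Or.inl (by omega)⟩, by omega⟩
      · -- P claim
        intro a b c hab hc
        simp only [List.toFinset_cons] at hc ⊢
        have hwl : w'.length = a + b + 1 := by omega
        rw [isCPermB_cons, admissibleB_pdiv]
        have hmem : s ∈ insert s w'.toFinset := Finset.mem_insert_self s _
        have hscne : s ≠ c := by rintro rfl; exact hc hmem
        obtain ⟨x, xs, rfl⟩ : ∃ x xs, w' = x :: xs := by
          cases w' with
          | nil => exfalso; rw [List.length_nil] at hwl; omega
          | cons x xs => exact ⟨x, xs, rfl⟩
        have hxs : x ≠ s := by simp at hsn; tauto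
        rw [List.headI_cons]
        rcases lt_or_gt_of_ne hscne with hlt | hgt
        · -- s < c
          have hs1 : s ∈ (insert s (x :: xs).toFinset).filter (fun t => t < c) :=
            Finset.mem_filter.2 ⟨hmem, hlt⟩
          have hs2 : s ∉ (insert s (x :: xs).toFinset).filter (fun t => c < t) :=
            fun hx => absurd (Finset.mem_filter.1 hx).2 (by omega)
          match a with
          | 0 =>
            rw [deleteB_pdiv_lo_first hs1 b]
            by_cases hmin : ∀ t ∈ insert s (x :: xs).toFinset, s ≤ t
            · have hfil : ((insert s (x :: xs).toFinset).filter (fun t => t < c)).filter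
                  (fun t => s < t) ∪ (insert s (x :: xs).toFinset).filter (fun t => c < t)
                  = (x :: xs).toFinset := by
                rw [fsF8 hsF hc hlt]
                apply Finset.filter_true_of_mem
                intro u hu
                have h1 := hmin u (Finset.mem_insert_of_mem hu)
                have h2 : u ≠ s := by rintro rfl; exact hsF hu
                omega
              rw [hfil, IH'.1 0 b (by omega)]
              rw [listDescents_cons, if_pos hlt]
              have hh : ¬ x < s := by
                have := hmin x (by simp)
                omega
              rw [if_neg hh]
              have hminB : ∀ u ∈ (insert s (x :: xs).toFinset).filter (fun t => t < c),
                  s ≤ u := fun u hu => hmin u (Finset.mem_filter.1 hu).1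
              constructor
              · rintro ⟨_, hx⟩; omega
              · intro hx; exact ⟨Or.inr ⟨hs1, Or.inr hminB⟩, by omega⟩
            · refine iff_of_false ?_ ?_
              · rintro ⟨hadm, _⟩
                rcases hadm with hx | ⟨_, hx | hx⟩
                · exact hs2 hx
                · omega
                · refine hmin ?_
                  intro u hu
                  by_cases huc : u < c
                  · exact hx u (Finset.mem_filter.2 ⟨hu, huc⟩)
                  · omega
              · intro hdes
                rw [if_pos hlt] at hdes
                have h0 : listDescents (s :: x :: xs) = 0 := by omega
                refine hmin ?_
                have := min_of_descents_zero hnd h0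
                simpa using this
          | (a' + 1) =>
            rw [deleteB_pdiv_lo_mid hs1 a' b, fsF7 hsF hlt, fsF8 hsF hc hlt]
            rw [IH'.2 a' b s (by omega) hsF]
            rw [listDescents_cons, if_pos hlt]
            rw [List.headI_cons]
            constructor
            · rintro ⟨_, hx⟩
              generalize (if x < s then 1 else 0) = d at hx ⊢
              omega
            · intro hx
              refine ⟨Or.inr ⟨hs1, Or.inl (by omega)⟩, ?_⟩
              generalize (if x < s then 1 else 0) = d at hx ⊢
              omega
        · -- c < s
          have hs2 : s ∈ (insert s (x :: xs).toFinset).filter (fun t => c < t) :=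
            Finset.mem_filter.2 ⟨hmem, hgt⟩
          have hs1 : s ∉ (insert s (x :: xs).toFinset).filter (fun t => t < c) :=
            fun hx => absurd (Finset.mem_filter.1 hx).2 (by omega)
          match b with
          | 0 =>
            rw [deleteB_pdiv_hi_last hs1 hs2 a, fsF6 hsF hc hgt]
            rw [IH'.1 a 0 (by omega)]
            refine iff_of_true ⟨Or.inl hs2, ?_⟩ ?_
            · have h1 := listDescents_lt_length (x :: xs) (by simp)
              rw [List.length_cons] at h1
              have h2 : xs.length + 1 = a + 1 := by simpa using hwl
              omega
            · rw [if_neg (show ¬ s < c by omega)]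
              have h1 := listDescents_lt_length (s :: x :: xs) (by simp)
              rw [List.length_cons, List.length_cons] at h1
              have h2 : xs.length + 1 = a + 1 := by simpa using hwl
              omega
          | (b' + 1) =>
            rw [deleteB_pdiv_hi_mid hs1 hs2 a b', fsF4 hsF hc hgt, fsF5 hsF hgt]
            rw [IH'.2 a b' s (by omega) hsF]
            rw [listDescents_cons, if_neg (show ¬ s < c by omega)]
            rw [List.headI_cons]
            constructor
            · rintro ⟨_, hx⟩
              generalize (if x < s then 1 else 0) = d at hx ⊢
              omega
            · intro hx
              refine ⟨Or.inl hs2, ?_⟩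
              generalize (if x < s then 1 else 0) = d at hx ⊢
              omega

/-- for the division of `{1,…,n}` with all elements in position `k`,
a permutation is a type B `C`-permutation iff it has at most `k-1` descents. -/
theorem cpermB_descents (n k : ℕ) (h1 : 1 ≤ k) (h2 : k ≤ n) :
    ∀ w : List ℕ, w.Perm (List.range' 1 n) →
      (IsCPermB (midDivision n k) w ↔ listDescents w ≤ k - 1) := by
  intro w hp
  have hnd : w.Nodup := hp.nodup_iff.2 (List.nodup_range' (s := 1) (n := n))
  have hlen : w.length = n := by
    rw [hp.length_eq, List.length_range']
  have hT : w.toFinset = Finset.Icc 1 n := by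
    rw [List.toFinset_eq_of_perm _ _ hp]
    ext t
    simp [List.mem_range'_1, Finset.mem_Icc]
    omega
  have hmid : midDivision n k = sdiv (k - 1) (Finset.Icc 1 n) (n - k) := by
    rw [midDivision, sdiv]
    simp [List.append_assoc]
  rw [hmid, ← hT]
  exact (key n w hlen hnd).1 (k - 1) (n - k) (by omega)

end MixedEulerian
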